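/- Suppose P is two-sided and directionally atomless, that b⁺ ≥ (a⁺)² and b⁻ ≥ (a⁻)², and that (ρ'+a⁺, ρ'+a⁻) ≠ (0,0). Fix Y < 0 and define J(u) = E[q] − (E[m])² + γ⁻Y·E[m] for u ∈ ℝⁿ (where Y' = sY + P'u). Then J attains its global minimum on ℝⁿ; a vector u* ∈ ℝⁿ is a global minimizer of J if and only if K* = u*/Y is a global minimizer of F⁻; and the minimum value satisfies min_{u∈ℝⁿ} J(u) = Y²·min_{K∈ℝⁿ} F⁻(K). -/

import Mathlib

open MeasureTheory

/-- The function `F⁻` from the paper, written with expectations as Bochner integrals. -/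
noncomputable def Fminus {Ω : Type*} [MeasurableSpace Ω] (ℙ : Measure Ω) {n : ℕ}
    (P : Ω → EuclideanSpace ℝ (Fin n)) (s ρ' γm ap am bp bm : ℝ)
    (K : EuclideanSpace ℝ (Fin n)) : ℝ :=
  let pk : Ω → ℝ := fun ω => inner ℝ (P ω) K
  let A : ℝ :=
    (∫ ω, ap * (s + pk ω) * (if s + pk ω ≤ 0 then (1:ℝ) else 0) ∂ℙ) +
    (∫ ω, am * (s + pk ω) * (if 0 < s + pk ω then (1:ℝ) else 0) ∂ℙ)
  ρ' ^ 2 * ((∫ ω, (pk ω) ^ 2 ∂ℙ) - (∫ ω, pk ω ∂ℙ) ^ 2) +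
  (∫ ω, (2 * ρ' * ap + bp) * (s + pk ω) ^ 2 * (if s + pk ω ≤ 0 then (1:ℝ) else 0) ∂ℙ) +
  (∫ ω, (2 * ρ' * am + bm) * (s + pk ω) ^ 2 * (if 0 < s + pk ω then (1:ℝ) else 0) ∂ℙ) -
  A ^ 2 - 2 * ρ' * A * (s + ∫ ω, pk ω ∂ℙ) + γm * A +
  ρ' * γm * (s + ∫ ω, pk ω ∂ℙ)

/-- The random variable `m = ρ'Y' + a⁺Y'·1{Y' ≥ 0} + a⁻Y'·1{Y' < 0}`,
where `Y' = sY + P'u`. -/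
noncomputable def mRV {Ω : Type*} {n : ℕ} (P : Ω → EuclideanSpace ℝ (Fin n))
    (s ρ' ap am : ℝ) (Y : ℝ) (u : EuclideanSpace ℝ (Fin n)) (ω : Ω) : ℝ :=
  let Y' : ℝ := s * Y + inner ℝ (P ω) u
  ρ' * Y' + ap * Y' * (if 0 ≤ Y' then (1:ℝ) else 0) +
    am * Y' * (if Y' < 0 then (1:ℝ) else 0)

/-- The random variable `q = ρ'²Y'² + (2ρ'a⁺+b⁺)Y'²·1{Y' ≥ 0} + (2ρ'a⁻+b⁻)Y'²·1{Y' < 0}`,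
where `Y' = sY + P'u`. -/
noncomputable def qRV {Ω : Type*} {n : ℕ} (P : Ω → EuclideanSpace ℝ (Fin n))
    (s ρ' ap am bp bm : ℝ) (Y : ℝ) (u : EuclideanSpace ℝ (Fin n)) (ω : Ω) : ℝ :=
  let Y' : ℝ := s * Y + inner ℝ (P ω) u
  ρ' ^ 2 * Y' ^ 2 + (2 * ρ' * ap + bp) * Y' ^ 2 * (if 0 ≤ Y' then (1:ℝ) else 0) +
    (2 * ρ' * am + bm) * Y' ^ 2 * (if Y' < 0 then (1:ℝ) else 0)


lemma abs_le_one_add_sq (x : ℝ) : |x| ≤ 1 + x ^ 2 := by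
  nlinarith [sq_nonneg (|x| - 1), sq_abs x, abs_nonneg x]

lemma min0_sq_le (x : ℝ) : (min x 0) ^ 2 ≤ x ^ 2 := by
  rcases le_total x 0 with h | h
  · rw [min_eq_left h]
  · rw [min_eq_right h]; simpa using sq_nonneg x

lemma max0_sq_le (x : ℝ) : (max x 0) ^ 2 ≤ x ^ 2 := by
  rcases le_total x 0 with h | h
  · rw [max_eq_right h]; simpa using sq_nonneg x
  · rw [max_eq_left h]

lemma min0_mul_max0 (x : ℝ) : min x 0 * max x 0 = 0 := by
  rcases le_total x 0 with h | h
  · rw [max_eq_right h, mul_zero]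
  · rw [min_eq_right h, zero_mul]

lemma growth_phi (c1 c2 x : ℝ) :
    |c1 * min x 0 + c2 * max x 0| ≤ (|c1| + |c2|) * (1 + x ^ 2) := by
  have h1 := abs_le_one_add_sq x
  have h2 : |c1 * min x 0 + c2 * max x 0| ≤ |c1| * |min x 0| + |c2| * |max x 0| := by
    calc |c1 * min x 0 + c2 * max x 0| ≤ |c1 * min x 0| + |c2 * max x 0| := abs_add_le _ _
    _ = |c1| * |min x 0| + |c2| * |max x 0| := by rw [abs_mul, abs_mul]
  have h3 : |min x 0| ≤ |x| := by
    rcases le_total x 0 with h | h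
    · rw [min_eq_left h]
    · rw [min_eq_right h]; simp [abs_nonneg]
  have h4 : |max x 0| ≤ |x| := by
    rcases le_total x 0 with h | h
    · rw [max_eq_right h]; simp [abs_nonneg]
    · rw [max_eq_left h]
  nlinarith [abs_nonneg c1, abs_nonneg c2, abs_nonneg x, abs_nonneg (min x 0),
    abs_nonneg (max x 0), sq_nonneg x]

lemma growth_phi2 (d1 d2 x : ℝ) :
    |d1 * (min x 0) ^ 2 + d2 * (max x 0) ^ 2| ≤ (|d1| + |d2|) * (1 + x ^ 2) := by
  have h1 := min0_sq_le x
  have h2 := max0_sq_le x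
  have h3 : |d1 * (min x 0) ^ 2 + d2 * (max x 0) ^ 2|
      ≤ |d1| * (min x 0) ^ 2 + |d2| * (max x 0) ^ 2 := by
    calc |d1 * (min x 0) ^ 2 + d2 * (max x 0) ^ 2|
        ≤ |d1 * (min x 0) ^ 2| + |d2 * (max x 0) ^ 2| := abs_add_le _ _
    _ = |d1| * (min x 0) ^ 2 + |d2| * (max x 0) ^ 2 := by
        rw [abs_mul, abs_mul, abs_of_nonneg (sq_nonneg (min x 0)),
          abs_of_nonneg (sq_nonneg (max x 0))]
  nlinarith [abs_nonneg d1, abs_nonneg d2, sq_nonneg x, sq_nonneg (min x 0), sq_nonneg (max x 0)]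

lemma growth_phisq (c1 c2 x : ℝ) :
    |(c1 * min x 0 + c2 * max x 0) ^ 2| ≤ (c1 ^ 2 + c2 ^ 2 + 1) * (1 + x ^ 2) := by
  rw [abs_of_nonneg (sq_nonneg _)]
  have h0 := min0_mul_max0 x
  have h1 := mul_le_mul_of_nonneg_left (min0_sq_le x) (sq_nonneg c1)
  have h2 := mul_le_mul_of_nonneg_left (max0_sq_le x) (sq_nonneg c2)
  have hexp : (c1 * min x 0 + c2 * max x 0) ^ 2
      = c1 ^ 2 * (min x 0) ^ 2 + c2 ^ 2 * (max x 0) ^ 2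
        + 2 * c1 * c2 * (min x 0 * max x 0) := by ring
  rw [hexp, h0, mul_zero, add_zero]
  nlinarith [sq_nonneg x]

section Work
variable {Ω : Type*} [MeasurableSpace Ω] (ℙ : Measure Ω) [IsProbabilityMeasure ℙ]
  {n : ℕ} (P : Ω → EuclideanSpace ℝ (Fin n))

lemma aux_integrable (hmeas : Measurable P)
    (hL2 : Integrable (fun ω => ‖P ω‖ ^ 2) ℙ)
    (h : ℝ → ℝ) (hc : Continuous h) (c : ℝ) (hg : ∀ x, |h x| ≤ c * (1 + x ^ 2))
    (s' : ℝ) (K : EuclideanSpace ℝ (Fin n)) :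
    Integrable (fun ω => h (s' + (inner ℝ (P ω) K : ℝ))) ℙ := by
  have hc0 : 0 ≤ c := le_trans (abs_nonneg _) (by simpa using hg 0)
  have hmeas' : AEStronglyMeasurable (fun ω => h (s' + (inner ℝ (P ω) K : ℝ))) ℙ :=
    (hc.measurable.comp (measurable_const.add (hmeas.inner measurable_const))).aestronglyMeasurable
  refine Integrable.mono' (g := fun ω => c * (1 + 2 * s' ^ 2 + 2 * ‖K‖ ^ 2 * ‖P ω‖ ^ 2))
    ?_ hmeas' ?_
  · exact (((integrable_const (1 + 2 * s' ^ 2)).add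
      ((hL2.const_mul (2 * ‖K‖ ^ 2)))).const_mul c)
  · refine Filter.Eventually.of_forall fun ω => ?_
    have hip : |(inner ℝ (P ω) K : ℝ)| ≤ ‖P ω‖ * ‖K‖ := abs_real_inner_le_norm _ _
    have h1 := hg (s' + (inner ℝ (P ω) K : ℝ))
    have h2 : (inner ℝ (P ω) K : ℝ) ^ 2 ≤ ‖P ω‖ ^ 2 * ‖K‖ ^ 2 := by
      nlinarith [sq_abs (inner ℝ (P ω) K : ℝ), abs_nonneg (inner ℝ (P ω) K : ℝ),
        norm_nonneg (P ω), norm_nonneg K]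
    have h3 : (s' + (inner ℝ (P ω) K : ℝ)) ^ 2 ≤ 2 * s' ^ 2 + 2 * ‖K‖ ^ 2 * ‖P ω‖ ^ 2 := by
      nlinarith [sq_nonneg (s' - (inner ℝ (P ω) K : ℝ))]
    calc ‖h (s' + (inner ℝ (P ω) K : ℝ))‖ = |h (s' + (inner ℝ (P ω) K : ℝ))| := rfl
    _ ≤ c * (1 + (s' + (inner ℝ (P ω) K : ℝ)) ^ 2) := h1
    _ ≤ c * (1 + 2 * s' ^ 2 + 2 * ‖K‖ ^ 2 * ‖P ω‖ ^ 2) := by nlinarith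

lemma aux_continuous (hmeas : Measurable P)
    (hL2 : Integrable (fun ω => ‖P ω‖ ^ 2) ℙ)
    (h : ℝ → ℝ) (hc : Continuous h) (c : ℝ) (hg : ∀ x, |h x| ≤ c * (1 + x ^ 2))
    (s' : ℝ) :
    Continuous (fun K : EuclideanSpace ℝ (Fin n) =>
      ∫ ω, h (s' + (inner ℝ (P ω) K : ℝ)) ∂ℙ) := by
  have hc0 : 0 ≤ c := le_trans (abs_nonneg _) (by simpa using hg 0)
  rw [continuous_iff_continuousAt]
  intro K₀
  refine continuousAt_of_dominated
    (bound := fun ω => c * (1 + 2 * s' ^ 2 + 2 * (‖K₀‖ + 1) ^ 2 * ‖P ω‖ ^ 2)) ?_ ?_ ?_ ?_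
  · exact Filter.Eventually.of_forall fun K =>
      (hc.measurable.comp
        (measurable_const.add (hmeas.inner measurable_const))).aestronglyMeasurable
  · have hball : Metric.ball K₀ 1 ∈ nhds K₀ := Metric.ball_mem_nhds _ one_pos
    refine Filter.eventually_of_mem hball fun K hK => Filter.Eventually.of_forall fun ω => ?_
    have hKn : ‖K‖ ≤ ‖K₀‖ + 1 := by
      have := mem_ball_iff_norm.mp hK
      have := norm_sub_norm_le K K₀
      linarith [le_of_lt (mem_ball_iff_norm.mp hK), norm_sub_norm_le K K₀]
    have hip : |(inner ℝ (P ω) K : ℝ)| ≤ ‖P ω‖ * ‖K‖ := abs_real_inner_le_norm _ _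
    have h1 := hg (s' + (inner ℝ (P ω) K : ℝ))
    have hKp : ‖P ω‖ * ‖K‖ ≤ ‖P ω‖ * (‖K₀‖ + 1) :=
      mul_le_mul_of_nonneg_left hKn (norm_nonneg _)
    have habs : |(inner ℝ (P ω) K : ℝ)| ≤ ‖P ω‖ * (‖K₀‖ + 1) := le_trans hip hKp
    have h2 : (inner ℝ (P ω) K : ℝ) ^ 2 ≤ ‖P ω‖ ^ 2 * (‖K₀‖ + 1) ^ 2 := by
      nlinarith [sq_abs (inner ℝ (P ω) K : ℝ), abs_nonneg (inner ℝ (P ω) K : ℝ)]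
    show ‖h (s' + (inner ℝ (P ω) K : ℝ))‖
      ≤ c * (1 + 2 * s' ^ 2 + 2 * (‖K₀‖ + 1) ^ 2 * ‖P ω‖ ^ 2)
    calc ‖h (s' + (inner ℝ (P ω) K : ℝ))‖ = |h (s' + (inner ℝ (P ω) K : ℝ))| := rfl
    _ ≤ c * (1 + (s' + (inner ℝ (P ω) K : ℝ)) ^ 2) := h1
    _ ≤ c * (1 + 2 * s' ^ 2 + 2 * (‖K₀‖ + 1) ^ 2 * ‖P ω‖ ^ 2) := by
        nlinarith [sq_nonneg (s' - (inner ℝ (P ω) K : ℝ))]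
  · exact ((integrable_const (1 + 2 * s' ^ 2)).add
      ((hL2.const_mul (2 * (‖K₀‖ + 1) ^ 2)))).const_mul c
  · refine Filter.Eventually.of_forall fun ω => ?_
    exact (hc.comp (continuous_const.add
      ((continuous_const.inner continuous_id)))).continuousAt

lemma integral_sub_mean_sq {f : Ω → ℝ} (hf : Integrable f ℙ)
    (hf2 : Integrable (fun ω => f ω ^ 2) ℙ) :
    ∫ ω, (f ω - ∫ ω', f ω' ∂ℙ) ^ 2 ∂ℙ = (∫ ω, f ω ^ 2 ∂ℙ) - (∫ ω, f ω ∂ℙ) ^ 2 := by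
  set μ := ∫ ω', f ω' ∂ℙ with hμ
  have h1 : (fun ω => (f ω - μ) ^ 2) = fun ω => (f ω ^ 2 - (2 * μ) * f ω) + μ ^ 2 := by
    funext ω; ring
  have ha : Integrable (fun ω => f ω ^ 2 - 2 * μ * f ω) ℙ := hf2.sub (hf.const_mul (2 * μ))
  have hb : Integrable (fun ω => 2 * μ * f ω) ℙ := hf.const_mul (2 * μ)
  rw [h1, integral_add ha (integrable_const _),
    integral_sub hf2 hb, integral_const_mul, integral_const]
  simp [measure_univ, ← hμ]
  ring

lemma var_nonneg {f : Ω → ℝ} (hf : Integrable f ℙ)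
    (hf2 : Integrable (fun ω => f ω ^ 2) ℙ) :
    (∫ ω, f ω ∂ℙ) ^ 2 ≤ ∫ ω, f ω ^ 2 ∂ℙ := by
  have h := integral_sub_mean_sq ℙ hf hf2
  have h2 : 0 ≤ ∫ ω, (f ω - ∫ ω', f ω' ∂ℙ) ^ 2 ∂ℙ := integral_nonneg fun ω => sq_nonneg _
  linarith

end Work

noncomputable def mtF {Ω : Type*} {n : ℕ} (P : Ω → EuclideanSpace ℝ (Fin n))
    (s cp cm : ℝ) (K : EuclideanSpace ℝ (Fin n)) (ω : Ω) : ℝ :=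
  cp * min (s + (inner ℝ (P ω) K : ℝ)) 0 + cm * max (s + (inner ℝ (P ω) K : ℝ)) 0

noncomputable def qtF {Ω : Type*} {n : ℕ} (P : Ω → EuclideanSpace ℝ (Fin n))
    (s d1 d2 : ℝ) (K : EuclideanSpace ℝ (Fin n)) (ω : Ω) : ℝ :=
  d1 * (min (s + (inner ℝ (P ω) K : ℝ)) 0) ^ 2 + d2 * (max (s + (inner ℝ (P ω) K : ℝ)) 0) ^ 2

lemma cont_phi (c1 c2 : ℝ) : Continuous fun x : ℝ => c1 * min x 0 + c2 * max x 0 :=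
  (continuous_const.mul (continuous_id.min continuous_const)).add
    (continuous_const.mul (continuous_id.max continuous_const))

lemma cont_phi2 (d1 d2 : ℝ) : Continuous fun x : ℝ => d1 * (min x 0) ^ 2 + d2 * (max x 0) ^ 2 :=
  (continuous_const.mul ((continuous_id.min continuous_const).pow 2)).add
    (continuous_const.mul ((continuous_id.max continuous_const).pow 2))

lemma lip_min (a b : ℝ) : |min a 0 - min b 0| ≤ |a - b| := by
  rcases le_total a 0 with ha | ha <;> rcases le_total b 0 with hb | hb
  · rw [min_eq_left ha, min_eq_left hb]
  · rw [min_eq_left ha, min_eq_right hb, sub_zero, abs_of_nonpos ha]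
    rcases abs_cases (a - b) with ⟨h, _⟩ | ⟨h, _⟩ <;> linarith
  · rw [min_eq_right ha, min_eq_left hb, zero_sub, abs_neg, abs_of_nonpos hb]
    rcases abs_cases (a - b) with ⟨h, _⟩ | ⟨h, _⟩ <;> linarith
  · rw [min_eq_right ha, min_eq_right hb, sub_zero, abs_zero]; exact abs_nonneg _
lemma lip_max (a b : ℝ) : |max a 0 - max b 0| ≤ |a - b| := by
  rcases le_total a 0 with ha | ha <;> rcases le_total b 0 with hb | hb
  · rw [max_eq_right ha, max_eq_right hb, sub_self, abs_zero]; exact abs_nonneg _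
  · rw [max_eq_right ha, max_eq_left hb, zero_sub, abs_neg, abs_of_nonneg hb]
    rcases abs_cases (a - b) with ⟨h, _⟩ | ⟨h, _⟩ <;> linarith
  · rw [max_eq_left ha, max_eq_right hb, sub_zero, abs_of_nonneg ha]
    rcases abs_cases (a - b) with ⟨h, _⟩ | ⟨h, _⟩ <;> linarith
  · rw [max_eq_left ha, max_eq_left hb]
noncomputable def VarI {Ω : Type*} [MeasurableSpace Ω] (ℙ : Measure Ω) (f : Ω → ℝ) : ℝ :=
  (∫ ω, (f ω) ^ 2 ∂ℙ) - (∫ ω, f ω ∂ℙ) ^ 2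

section Work2
variable {Ω : Type*} [MeasurableSpace Ω] (ℙ : Measure Ω) [IsProbabilityMeasure ℙ]
  {n : ℕ} (P : Ω → EuclideanSpace ℝ (Fin n))
  (hmeas : Measurable P) (hL2 : Integrable (fun ω => ‖P ω‖ ^ 2) ℙ)

include hmeas hL2

set_option linter.unusedSectionVars false

lemma int_mt (s cp cm : ℝ) (K : EuclideanSpace ℝ (Fin n)) :
    Integrable (mtF P s cp cm K) ℙ :=
  aux_integrable ℙ P hmeas hL2 _ (cont_phi cp cm) (|cp| + |cm|) (growth_phi cp cm) s K

lemma int_mt_sq (s cp cm : ℝ) (K : EuclideanSpace ℝ (Fin n)) :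
    Integrable (fun ω => (mtF P s cp cm K ω) ^ 2) ℙ :=
  aux_integrable ℙ P hmeas hL2 (fun x => (cp * min x 0 + cm * max x 0) ^ 2)
    ((cont_phi cp cm).pow 2) (cp ^ 2 + cm ^ 2 + 1) (growth_phisq cp cm) s K

lemma int_qt (s d1 d2 : ℝ) (K : EuclideanSpace ℝ (Fin n)) :
    Integrable (qtF P s d1 d2 K) ℙ :=
  aux_integrable ℙ P hmeas hL2 _ (cont_phi2 d1 d2) (|d1| + |d2|) (growth_phi2 d1 d2) s K

lemma int_pk (K : EuclideanSpace ℝ (Fin n)) :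
    Integrable (fun ω => (inner ℝ (P ω) K : ℝ)) ℙ := by
  have := aux_integrable ℙ P hmeas hL2 (fun x => x) continuous_id 1
    (fun x => by simpa using abs_le_one_add_sq x) 0 K
  simpa using this

lemma int_pk_sq (K : EuclideanSpace ℝ (Fin n)) :
    Integrable (fun ω => (inner ℝ (P ω) K : ℝ) ^ 2) ℙ := by
  have := aux_integrable ℙ P hmeas hL2 (fun x => x ^ 2) (continuous_pow 2) 1
    (fun x => by rw [abs_of_nonneg (sq_nonneg x)]; nlinarith [sq_nonneg x]) 0 K
  simpa using this

lemma int_sq_shift (s : ℝ) (K : EuclideanSpace ℝ (Fin n)) :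
    Integrable (fun ω => (s + (inner ℝ (P ω) K : ℝ)) ^ 2) ℙ :=
  aux_integrable ℙ P hmeas hL2 (fun x => x ^ 2) (continuous_pow 2) 1
    (fun x => by rw [abs_of_nonneg (sq_nonneg x)]; nlinarith [sq_nonneg x]) s K

omit hmeas hL2 in
lemma int_centered_sq {f : Ω → ℝ} (hf : Integrable f ℙ)
    (hf2 : Integrable (fun ω => f ω ^ 2) ℙ) (μ : ℝ) :
    Integrable (fun ω => (f ω - μ) ^ 2) ℙ := by
  have h : (fun ω => (f ω - μ) ^ 2) = fun ω => (f ω ^ 2 - (2 * μ) * f ω) + μ ^ 2 := by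
    funext ω; ring
  rw [h]
  exact (hf2.sub (hf.const_mul _)).add (integrable_const _)

omit hmeas hL2 in
lemma mt_sub_psi_abs_le (s cp cm : ℝ) (hs : 0 ≤ s) (K : EuclideanSpace ℝ (Fin n)) (ω : Ω) :
    |mtF P s cp cm K ω - mtF P 0 cp cm K ω| ≤ (|cp| + |cm|) * s := by
  set x := (inner ℝ (P ω) K : ℝ)
  have h1 := lip_min (s + x) (0 + x)
  have h2 := lip_max (s + x) (0 + x)
  have hx : s + x - (0 + x) = s := by ring
  rw [hx, abs_of_nonneg hs] at h1 h2
  have hd : mtF P s cp cm K ω - mtF P 0 cp cm K ω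
      = cp * (min (s + x) 0 - min (0 + x) 0) + cm * (max (s + x) 0 - max (0 + x) 0) := by
    simp only [mtF]; ring
  rw [hd]
  calc |cp * (min (s + x) 0 - min (0 + x) 0) + cm * (max (s + x) 0 - max (0 + x) 0)|
      ≤ |cp * (min (s + x) 0 - min (0 + x) 0)| + |cm * (max (s + x) 0 - max (0 + x) 0)| :=
        abs_add_le _ _
    _ = |cp| * |min (s + x) 0 - min (0 + x) 0| + |cm| * |max (s + x) 0 - max (0 + x) 0| := by
        rw [abs_mul, abs_mul]
    _ ≤ (|cp| + |cm|) * s := by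
        nlinarith [abs_nonneg cp, abs_nonneg cm, abs_nonneg (min (s + x) 0 - min (0 + x) 0),
          abs_nonneg (max (s + x) 0 - max (0 + x) 0)]

lemma var_lower (s cp cm : ℝ) (hs : 0 ≤ s) (K : EuclideanSpace ℝ (Fin n)) :
    VarI ℙ (mtF P 0 cp cm K) / 2 - 4 * ((|cp| + |cm|) * s) ^ 2
      ≤ VarI ℙ (mtF P s cp cm K) := by
  set M := |cp| + |cm| with hMdef
  have hM : 0 ≤ M := by positivity
  have imt := int_mt ℙ P hmeas hL2 s cp cm K
  have imt2 := int_mt_sq ℙ P hmeas hL2 s cp cm K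
  have iψ := int_mt ℙ P hmeas hL2 0 cp cm K
  have iψ2 := int_mt_sq ℙ P hmeas hL2 0 cp cm K
  set mt := mtF P s cp cm K with hmt
  set ψ := mtF P 0 cp cm K with hψ
  set μm := ∫ ω, mt ω ∂ℙ with hμm
  set μψ := ∫ ω, ψ ω ∂ℙ with hμψ
  have hdiff : ∀ ω, |mt ω - ψ ω| ≤ M * s := fun ω => mt_sub_psi_abs_le P s cp cm hs K ω
  have hμdiff : |μm - μψ| ≤ M * s := by
    have he : μm - μψ = ∫ ω, (mt ω - ψ ω) ∂ℙ := (integral_sub imt iψ).symm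
    rw [he]
    calc |∫ ω, (mt ω - ψ ω) ∂ℙ| ≤ ∫ ω, |mt ω - ψ ω| ∂ℙ := by
          simpa [Real.norm_eq_abs] using norm_integral_le_integral_norm (μ := ℙ)
            (fun ω => mt ω - ψ ω)
      _ ≤ ∫ _ω, M * s ∂ℙ := integral_mono (imt.sub iψ).abs (integrable_const _) hdiff
      _ = M * s := by simp [measure_univ]
  set w := fun ω => mt ω - ψ ω - (μm - μψ) with hwdef
  have hw : ∀ ω, |w ω| ≤ 2 * (M * s) := by
    intro ω
    have h1 := hdiff ω
    have h2 := hμdiff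
    calc |w ω| = |(mt ω - ψ ω) - (μm - μψ)| := rfl
      _ ≤ |mt ω - ψ ω| + |μm - μψ| := abs_sub _ _
      _ ≤ 2 * (M * s) := by linarith
  have hwmeas : AEStronglyMeasurable w ℙ :=
    (imt.1.sub iψ.1).sub aestronglyMeasurable_const
  have hw2meas : AEStronglyMeasurable (fun ω => (w ω) ^ 2) ℙ := by
    exact hwmeas.pow 2
  have hw2int : Integrable (fun ω => (w ω) ^ 2) ℙ := by
    refine Integrable.mono' (integrable_const ((2 * (M * s)) ^ 2)) hw2meas ?_
    refine Filter.Eventually.of_forall fun ω => ?_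
    have := hw ω
    rw [Real.norm_eq_abs, abs_of_nonneg (sq_nonneg _)]
    nlinarith [abs_nonneg (w ω), sq_abs (w ω)]
  have hψc2 := int_centered_sq ℙ iψ iψ2 μψ
  have hmtc2 := int_centered_sq ℙ imt imt2 μm
  have hpt : ∀ ω, (ψ ω - μψ) ^ 2 / 2 - (w ω) ^ 2 ≤ (mt ω - μm) ^ 2 := by
    intro ω
    have hdec : mt ω - μm = (ψ ω - μψ) + w ω := by simp only [hwdef]; ring
    have base : ∀ a b : ℝ, a ^ 2 / 2 - b ^ 2 ≤ (a + b) ^ 2 := fun a b => by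
      nlinarith [sq_nonneg (a + 2 * b)]
    rw [hdec]; exact base _ _
  have hIneq : ∫ ω, ((ψ ω - μψ) ^ 2 / 2 - (w ω) ^ 2) ∂ℙ ≤ ∫ ω, (mt ω - μm) ^ 2 ∂ℙ :=
    integral_mono ((hψc2.div_const 2).sub hw2int) hmtc2 hpt
  rw [integral_sub (hψc2.div_const 2) hw2int, integral_div] at hIneq
  have eψ := integral_sub_mean_sq ℙ iψ iψ2
  have emt := integral_sub_mean_sq ℙ imt imt2
  have hw2le : ∫ ω, (w ω) ^ 2 ∂ℙ ≤ (2 * (M * s)) ^ 2 := by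
    calc ∫ ω, (w ω) ^ 2 ∂ℙ ≤ ∫ _ω, (2 * (M * s)) ^ 2 ∂ℙ := by
          refine integral_mono hw2int (integrable_const _) fun ω => ?_
          have := hw ω
          nlinarith [abs_nonneg (w ω), sq_abs (w ω)]
      _ = (2 * (M * s)) ^ 2 := by simp [measure_univ]
  simp only [VarI]
  rw [← hμψ, ← hμm]
  rw [← hμψ] at eψ
  rw [← hμm] at emt
  have h4 : (2 * (M * s)) ^ 2 = 4 * (M * s) ^ 2 := by ring
  clear_value w μψ μm ψ mt M
  linarith [hIneq, eψ, emt, hw2le, h4]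

end Work2
section Work3
variable {Ω : Type*} [MeasurableSpace Ω] (ℙ : Measure Ω) [IsProbabilityMeasure ℙ]
  {n : ℕ} (P : Ω → EuclideanSpace ℝ (Fin n))

set_option linter.unusedSectionVars false

lemma psi_smul (cp cm t : ℝ) (ht : 0 ≤ t) (K : EuclideanSpace ℝ (Fin n)) (ω : Ω) :
    mtF P 0 cp cm (t • K) ω = t * mtF P 0 cp cm K ω := by
  simp only [mtF, real_inner_smul_right, zero_add]
  set x := (inner ℝ (P ω) K : ℝ)
  have h1 : min (t * x) 0 = t * min x 0 := by
    rw [mul_min_of_nonneg _ _ ht, mul_zero]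
  have h2 : max (t * x) 0 = t * max x 0 := by
    rw [mul_max_of_nonneg _ _ ht, mul_zero]
  rw [h1, h2]; ring

lemma V_smul (cp cm t : ℝ) (ht : 0 ≤ t) (K : EuclideanSpace ℝ (Fin n)) :
    VarI ℙ (mtF P 0 cp cm (t • K)) = t ^ 2 * VarI ℙ (mtF P 0 cp cm K) := by
  have e1 : ∫ ω, (mtF P 0 cp cm (t • K) ω) ^ 2 ∂ℙ
      = t ^ 2 * ∫ ω, (mtF P 0 cp cm K ω) ^ 2 ∂ℙ := by
    rw [← integral_const_mul]
    congr 1; funext ω; rw [psi_smul P cp cm t ht K ω]; ring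
  have e2 : ∫ ω, mtF P 0 cp cm (t • K) ω ∂ℙ = t * ∫ ω, mtF P 0 cp cm K ω ∂ℙ := by
    rw [← integral_const_mul]
    congr 1; funext ω; rw [psi_smul P cp cm t ht K ω]
  simp only [VarI]; rw [e1, e2]; ring

lemma V_pos (hmeas : Measurable P) (hL2 : Integrable (fun ω => ‖P ω‖ ^ 2) ℙ)
    (cp cm : ℝ) (hcpcm : ¬(cp = 0 ∧ cm = 0))
    (htwosided : ∀ L : EuclideanSpace ℝ (Fin n), L ≠ 0 →
      0 < ℙ {ω | 0 < (inner ℝ (P ω) L : ℝ)} ∧ 0 < ℙ {ω | (inner ℝ (P ω) L : ℝ) < 0})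
    (hatomless : ∀ L : EuclideanSpace ℝ (Fin n), L ≠ 0 →
      ∀ c : ℝ, ℙ {ω | (inner ℝ (P ω) L : ℝ) = c} = 0)
    (K : EuclideanSpace ℝ (Fin n)) (hK : K ≠ 0) :
    0 < VarI ℙ (mtF P 0 cp cm K) := by
  have iψ := int_mt ℙ P hmeas hL2 0 cp cm K
  have iψ2 := int_mt_sq ℙ P hmeas hL2 0 cp cm K
  set μ := ∫ ω, mtF P 0 cp cm K ω ∂ℙ with hμ
  have hc2 := int_centered_sq ℙ iψ iψ2 μ
  have e := integral_sub_mean_sq ℙ iψ iψ2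
  rw [← hμ] at e
  have hnn : 0 ≤ ∫ ω, (mtF P 0 cp cm K ω - μ) ^ 2 ∂ℙ :=
    integral_nonneg fun ω => sq_nonneg _
  have hVnn : VarI ℙ (mtF P 0 cp cm K)
      = ∫ ω, (mtF P 0 cp cm K ω - μ) ^ 2 ∂ℙ := by
    simp only [VarI, ← hμ]; rw [e]
  by_contra hcon
  push_neg at hcon
  have hV0 : ∫ ω, (mtF P 0 cp cm K ω - μ) ^ 2 ∂ℙ = 0 := le_antisymm (by linarith [hVnn ▸ hcon]) hnn
  have hae0 := (integral_eq_zero_iff_of_nonneg (fun ω => sq_nonneg _) hc2).mp hV0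
  have hae : ∀ᵐ ω ∂ℙ, mtF P 0 cp cm K ω = μ := by
    filter_upwards [hae0] with ω hω
    have h2 : (mtF P 0 cp cm K ω - μ) ^ 2 = 0 := hω
    have h3 := (pow_eq_zero_iff (two_ne_zero)).mp h2
    linarith [sub_eq_zero.mp h3]
  have hne0 : ℙ {ω | ¬ (mtF P 0 cp cm K ω = μ)} = 0 := ae_iff.mp hae
  by_cases hcp : cp = 0
  · have hcm : cm ≠ 0 := fun h => hcpcm ⟨hcp, h⟩
    have hS := (htwosided K hK).1
    have hsub : {ω | 0 < (inner ℝ (P ω) K : ℝ)}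
        ⊆ {ω | ¬ (mtF P 0 cp cm K ω = μ)} ∪ {ω | (inner ℝ (P ω) K : ℝ) = μ / cm} := by
      intro ω hω
      by_cases hψω : mtF P 0 cp cm K ω = μ
      · right
        have hx : (0:ℝ) < inner ℝ (P ω) K := hω
        have hval : mtF P 0 cp cm K ω = cm * (inner ℝ (P ω) K : ℝ) := by
          have h1 : min ((0:ℝ) + (inner ℝ (P ω) K : ℝ)) 0 = 0 :=
            min_eq_right (by linarith)
          have h2 : max ((0:ℝ) + (inner ℝ (P ω) K : ℝ)) 0 = (0:ℝ) + (inner ℝ (P ω) K : ℝ) :=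
            max_eq_left (by linarith)
          simp only [mtF]; rw [h1, h2]; ring
        rw [hval] at hψω
        show (inner ℝ (P ω) K : ℝ) = μ / cm
        rw [eq_div_iff hcm, mul_comm]; exact hψω
      · left; exact hψω
    have hle := (measure_mono (μ := ℙ) hsub).trans (measure_union_le _ _)
    rw [hne0, hatomless K hK (μ / cm), zero_add] at hle
    exact absurd (le_antisymm hle zero_le) (ne_of_gt hS)
  · have hS := (htwosided K hK).2
    have hsub : {ω | (inner ℝ (P ω) K : ℝ) < 0}
        ⊆ {ω | ¬ (mtF P 0 cp cm K ω = μ)} ∪ {ω | (inner ℝ (P ω) K : ℝ) = μ / cp} := by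
      intro ω hω
      by_cases hψω : mtF P 0 cp cm K ω = μ
      · right
        have hx : (inner ℝ (P ω) K : ℝ) < 0 := hω
        have hval : mtF P 0 cp cm K ω = cp * (inner ℝ (P ω) K : ℝ) := by
          have h1 : min ((0:ℝ) + (inner ℝ (P ω) K : ℝ)) 0 = (0:ℝ) + (inner ℝ (P ω) K : ℝ) :=
            min_eq_left (by linarith)
          have h2 : max ((0:ℝ) + (inner ℝ (P ω) K : ℝ)) 0 = 0 :=
            max_eq_right (by linarith)
          simp only [mtF]; rw [h1, h2]; ring
        rw [hval] at hψω
        show (inner ℝ (P ω) K : ℝ) = μ / cp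
        rw [eq_div_iff hcp, mul_comm]; exact hψω
      · left; exact hψω
    have hle := (measure_mono (μ := ℙ) hsub).trans (measure_union_le _ _)
    rw [hne0, hatomless K hK (μ / cp), zero_add] at hle
    exact absurd (le_antisymm hle zero_le) (ne_of_gt hS)

end Work3
lemma minmax_add (x : ℝ) : min x 0 + max x 0 = x := by
  rcases le_total x 0 with h | h
  · rw [min_eq_left h, max_eq_right h, add_zero]
  · rw [min_eq_right h, max_eq_left h, zero_add]

lemma minmax_sq (x : ℝ) : (min x 0) ^ 2 + (max x 0) ^ 2 = x ^ 2 := by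
  rcases le_total x 0 with h | h
  · rw [min_eq_left h, max_eq_right h]; ring
  · rw [min_eq_right h, max_eq_left h]; ring

lemma abs_min0_le (x : ℝ) : |min x 0| ≤ |x| := by
  rcases le_total x 0 with h | h
  · rw [min_eq_left h]
  · rw [min_eq_right h]; simp [abs_nonneg]

lemma abs_max0_le (x : ℝ) : |max x 0| ≤ |x| := by
  rcases le_total x 0 with h | h
  · rw [max_eq_right h]; simp [abs_nonneg]
  · rw [max_eq_left h]

lemma growth_cminlin (c x : ℝ) : |c * min x 0| ≤ |c| * (1 + x ^ 2) := by
  rw [abs_mul]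
  exact mul_le_mul_of_nonneg_left ((abs_min0_le x).trans (abs_le_one_add_sq x)) (abs_nonneg c)

lemma growth_cmaxlin (c x : ℝ) : |c * max x 0| ≤ |c| * (1 + x ^ 2) := by
  rw [abs_mul]
  exact mul_le_mul_of_nonneg_left ((abs_max0_le x).trans (abs_le_one_add_sq x)) (abs_nonneg c)

lemma growth_cmin2 (c x : ℝ) : |c * (min x 0) ^ 2| ≤ |c| * (1 + x ^ 2) := by
  rw [abs_mul, abs_of_nonneg (sq_nonneg (min x 0))]
  refine mul_le_mul_of_nonneg_left ?_ (abs_nonneg c)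
  nlinarith [min0_sq_le x]

lemma growth_cmax2 (c x : ℝ) : |c * (max x 0) ^ 2| ≤ |c| * (1 + x ^ 2) := by
  rw [abs_mul, abs_of_nonneg (sq_nonneg (max x 0))]
  refine mul_le_mul_of_nonneg_left ?_ (abs_nonneg c)
  nlinarith [max0_sq_le x]

noncomputable def GF {Ω : Type*} [MeasurableSpace Ω] (ℙ : Measure Ω) {n : ℕ}
    (P : Ω → EuclideanSpace ℝ (Fin n)) (s γm cp cm d1 d2 : ℝ)
    (K : EuclideanSpace ℝ (Fin n)) : ℝ :=
  (∫ ω, qtF P s d1 d2 K ω ∂ℙ) - (∫ ω, mtF P s cp cm K ω ∂ℙ) ^ 2 +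
    γm * ∫ ω, mtF P s cp cm K ω ∂ℙ

section Work4
variable {Ω : Type*} [MeasurableSpace Ω] (ℙ : Measure Ω) [IsProbabilityMeasure ℙ]
  {n : ℕ} (P : Ω → EuclideanSpace ℝ (Fin n))

set_option linter.unusedSectionVars false

lemma FeqG (hmeas : Measurable P) (hL2 : Integrable (fun ω => ‖P ω‖ ^ 2) ℙ)
    (s ρ' γm ap am bp bm : ℝ) (K : EuclideanSpace ℝ (Fin n)) :
    Fminus ℙ P s ρ' γm ap am bp bm K
      = GF ℙ P s γm (ρ' + ap) (ρ' + am) (ρ' ^ 2 + 2 * ρ' * ap + bp)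
          (ρ' ^ 2 + 2 * ρ' * am + bm) K := by
  have ipk := int_pk ℙ P hmeas hL2 K
  have ipk2 := int_pk_sq ℙ P hmeas hL2 K
  have isq := int_sq_shift ℙ P hmeas hL2 s K
  have iA1 : Integrable (fun ω => ap * min (s + (inner ℝ (P ω) K : ℝ)) 0) ℙ :=
    aux_integrable ℙ P hmeas hL2 (fun x => ap * min x 0)
      (continuous_const.mul (continuous_id.min continuous_const)) |ap|
      (growth_cminlin ap) s K
  have iA2 : Integrable (fun ω => am * max (s + (inner ℝ (P ω) K : ℝ)) 0) ℙ :=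
    aux_integrable ℙ P hmeas hL2 (fun x => am * max x 0)
      (continuous_const.mul (continuous_id.max continuous_const)) |am|
      (growth_cmaxlin am) s K
  have iQ1 : Integrable (fun ω => (2 * ρ' * ap + bp) * (min (s + (inner ℝ (P ω) K : ℝ)) 0) ^ 2) ℙ :=
    aux_integrable ℙ P hmeas hL2 (fun x => (2 * ρ' * ap + bp) * (min x 0) ^ 2)
      (continuous_const.mul ((continuous_id.min continuous_const).pow 2)) |2 * ρ' * ap + bp|
      (growth_cmin2 _) s K
  have iQ2 : Integrable (fun ω => (2 * ρ' * am + bm) * (max (s + (inner ℝ (P ω) K : ℝ)) 0) ^ 2) ℙ :=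
    aux_integrable ℙ P hmeas hL2 (fun x => (2 * ρ' * am + bm) * (max x 0) ^ 2)
      (continuous_const.mul ((continuous_id.max continuous_const).pow 2)) |2 * ρ' * am + bm|
      (growth_cmax2 _) s K
  have iR : Integrable (fun ω => ρ' ^ 2 * (s + (inner ℝ (P ω) K : ℝ)) ^ 2) ℙ := isq.const_mul _
  -- rewrite F-side indicator integrals
  have e1 : (∫ ω, ap * (s + (inner ℝ (P ω) K : ℝ)) *
        (if s + (inner ℝ (P ω) K : ℝ) ≤ 0 then (1:ℝ) else 0) ∂ℙ)
      = ∫ ω, ap * min (s + (inner ℝ (P ω) K : ℝ)) 0 ∂ℙ := by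
    refine integral_congr_ae (Filter.Eventually.of_forall fun ω => ?_)
    beta_reduce
    by_cases h : s + (inner ℝ (P ω) K : ℝ) ≤ 0
    · rw [if_pos h, min_eq_left h]; ring
    · rw [if_neg h, min_eq_right (le_of_not_ge h)]; ring
  have e2 : (∫ ω, am * (s + (inner ℝ (P ω) K : ℝ)) *
        (if 0 < s + (inner ℝ (P ω) K : ℝ) then (1:ℝ) else 0) ∂ℙ)
      = ∫ ω, am * max (s + (inner ℝ (P ω) K : ℝ)) 0 ∂ℙ := by
    refine integral_congr_ae (Filter.Eventually.of_forall fun ω => ?_)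
    beta_reduce
    by_cases h : 0 < s + (inner ℝ (P ω) K : ℝ)
    · rw [if_pos h, max_eq_left h.le]; ring
    · rw [if_neg h, max_eq_right (le_of_not_gt h)]; ring
  have e3 : (∫ ω, (2 * ρ' * ap + bp) * (s + (inner ℝ (P ω) K : ℝ)) ^ 2 *
        (if s + (inner ℝ (P ω) K : ℝ) ≤ 0 then (1:ℝ) else 0) ∂ℙ)
      = ∫ ω, (2 * ρ' * ap + bp) * (min (s + (inner ℝ (P ω) K : ℝ)) 0) ^ 2 ∂ℙ := by
    refine integral_congr_ae (Filter.Eventually.of_forall fun ω => ?_)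
    beta_reduce
    by_cases h : s + (inner ℝ (P ω) K : ℝ) ≤ 0
    · rw [if_pos h, min_eq_left h]; ring
    · rw [if_neg h, min_eq_right (le_of_not_ge h)]; ring
  have e4 : (∫ ω, (2 * ρ' * am + bm) * (s + (inner ℝ (P ω) K : ℝ)) ^ 2 *
        (if 0 < s + (inner ℝ (P ω) K : ℝ) then (1:ℝ) else 0) ∂ℙ)
      = ∫ ω, (2 * ρ' * am + bm) * (max (s + (inner ℝ (P ω) K : ℝ)) 0) ^ 2 ∂ℙ := by
    refine integral_congr_ae (Filter.Eventually.of_forall fun ω => ?_)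
    beta_reduce
    by_cases h : 0 < s + (inner ℝ (P ω) K : ℝ)
    · rw [if_pos h, max_eq_left h.le]; ring
    · rw [if_neg h, max_eq_right (le_of_not_gt h)]; ring
  -- decompose G-side integrals
  have hI1 : (∫ ω, (s + (inner ℝ (P ω) K : ℝ)) ∂ℙ) = s + ∫ ω, (inner ℝ (P ω) K : ℝ) ∂ℙ := by
    rw [integral_add (integrable_const s) ipk, integral_const]
    simp [measure_univ]
  have hI2s : (∫ ω, (s + (inner ℝ (P ω) K : ℝ)) ^ 2 ∂ℙ)
      = s ^ 2 + 2 * s * (∫ ω, (inner ℝ (P ω) K : ℝ) ∂ℙ) + ∫ ω, (inner ℝ (P ω) K : ℝ) ^ 2 ∂ℙ := by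
    have hpt : (fun ω => (s + (inner ℝ (P ω) K : ℝ)) ^ 2)
        = fun ω => (s ^ 2 + (2 * s) * (inner ℝ (P ω) K : ℝ)) + (inner ℝ (P ω) K : ℝ) ^ 2 := by
      funext ω; ring
    have ic : Integrable (fun _ω : Ω => s ^ 2) ℙ := integrable_const _
    have il : Integrable (fun ω => (2 * s) * (inner ℝ (P ω) K : ℝ)) ℙ := ipk.const_mul _
    have i1 : Integrable (fun ω => s ^ 2 + (2 * s) * (inner ℝ (P ω) K : ℝ)) ℙ := ic.add il
    rw [hpt, integral_add i1 ipk2, integral_add ic il, integral_const, integral_const_mul]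
    simp [measure_univ]
  have hQdecomp : (∫ ω, qtF P s (ρ' ^ 2 + 2 * ρ' * ap + bp) (ρ' ^ 2 + 2 * ρ' * am + bm) K ω ∂ℙ)
      = ρ' ^ 2 * (∫ ω, (s + (inner ℝ (P ω) K : ℝ)) ^ 2 ∂ℙ)
        + (∫ ω, (2 * ρ' * ap + bp) * (min (s + (inner ℝ (P ω) K : ℝ)) 0) ^ 2 ∂ℙ)
        + ∫ ω, (2 * ρ' * am + bm) * (max (s + (inner ℝ (P ω) K : ℝ)) 0) ^ 2 ∂ℙ := by
    have hpt : (fun ω => qtF P s (ρ' ^ 2 + 2 * ρ' * ap + bp) (ρ' ^ 2 + 2 * ρ' * am + bm) K ω)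
        = fun ω => (ρ' ^ 2 * (s + (inner ℝ (P ω) K : ℝ)) ^ 2
            + (2 * ρ' * ap + bp) * (min (s + (inner ℝ (P ω) K : ℝ)) 0) ^ 2)
            + (2 * ρ' * am + bm) * (max (s + (inner ℝ (P ω) K : ℝ)) 0) ^ 2 := by
      funext ω
      have h := minmax_sq (s + (inner ℝ (P ω) K : ℝ))
      simp only [qtF]
      linear_combination (ρ' ^ 2) * h
    have iRQ1 : Integrable (fun ω => ρ' ^ 2 * (s + (inner ℝ (P ω) K : ℝ)) ^ 2
        + (2 * ρ' * ap + bp) * (min (s + (inner ℝ (P ω) K : ℝ)) 0) ^ 2) ℙ := iR.add iQ1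
    rw [hpt, integral_add iRQ1 iQ2, integral_add iR iQ1, integral_const_mul]
  have hMdecomp : (∫ ω, mtF P s (ρ' + ap) (ρ' + am) K ω ∂ℙ)
      = ((∫ ω, ap * min (s + (inner ℝ (P ω) K : ℝ)) 0 ∂ℙ)
          + (∫ ω, am * max (s + (inner ℝ (P ω) K : ℝ)) 0 ∂ℙ))
        + ρ' * (s + ∫ ω, (inner ℝ (P ω) K : ℝ) ∂ℙ) := by
    have hpt : (fun ω => mtF P s (ρ' + ap) (ρ' + am) K ω)
        = fun ω => (ap * min (s + (inner ℝ (P ω) K : ℝ)) 0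
            + am * max (s + (inner ℝ (P ω) K : ℝ)) 0)
            + ρ' * (s + (inner ℝ (P ω) K : ℝ)) := by
      funext ω
      have h := minmax_add (s + (inner ℝ (P ω) K : ℝ))
      simp only [mtF]
      linear_combination ρ' * h
    have iρ : Integrable (fun ω => ρ' * (s + (inner ℝ (P ω) K : ℝ))) ℙ :=
      ((integrable_const s).add ipk).const_mul ρ'
    have iA12 : Integrable (fun ω => ap * min (s + (inner ℝ (P ω) K : ℝ)) 0
        + am * max (s + (inner ℝ (P ω) K : ℝ)) 0) ℙ := iA1.add iA2
    rw [hpt, integral_add iA12 iρ, integral_add iA1 iA2,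
      show (∫ ω, ρ' * (s + (inner ℝ (P ω) K : ℝ)) ∂ℙ)
          = ρ' * (s + ∫ ω, (inner ℝ (P ω) K : ℝ) ∂ℙ) from by rw [integral_const_mul, hI1]]
  simp only [Fminus, GF]
  rw [e1, e2, e3, e4, hQdecomp, hMdecomp, hI2s]
  ring

end Work4
section Work5
variable {Ω : Type*} [MeasurableSpace Ω] {n : ℕ} (P : Ω → EuclideanSpace ℝ (Fin n))

lemma qRV_eq (s ρ' ap am bp bm Y : ℝ) (hY : Y < 0)
    (u : EuclideanSpace ℝ (Fin n)) (ω : Ω) :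
    qRV P s ρ' ap am bp bm Y u ω
      = Y ^ 2 * qtF P s (ρ' ^ 2 + 2 * ρ' * ap + bp) (ρ' ^ 2 + 2 * ρ' * am + bm)
          ((1 / Y) • u) ω := by
  have hYne : Y ≠ 0 := ne_of_lt hY
  simp only [qRV, qtF, real_inner_smul_right]
  set x := (inner ℝ (P ω) u : ℝ) with hx
  have hsx : s + 1 / Y * x = (s * Y + x) / Y := by field_simp
  rw [hsx]
  rcases le_or_gt 0 (s * Y + x) with h | h
  · have hd : (s * Y + x) / Y ≤ 0 := div_nonpos_of_nonneg_of_nonpos h hY.le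
    rw [if_pos h, if_neg (not_lt.mpr h), min_eq_left hd, max_eq_right hd]
    field_simp
    ring
  · have hd : 0 ≤ (s * Y + x) / Y := div_nonneg_of_nonpos h.le hY.le
    rw [if_neg (not_le.mpr h), if_pos h, min_eq_right hd, max_eq_left hd]
    field_simp
    ring

lemma mRV_eq (s ρ' ap am Y : ℝ) (hY : Y < 0)
    (u : EuclideanSpace ℝ (Fin n)) (ω : Ω) :
    mRV P s ρ' ap am Y u ω
      = Y * mtF P s (ρ' + ap) (ρ' + am) ((1 / Y) • u) ω := by
  have hYne : Y ≠ 0 := ne_of_lt hY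
  simp only [mRV, mtF, real_inner_smul_right]
  set x := (inner ℝ (P ω) u : ℝ) with hx
  have hsx : s + 1 / Y * x = (s * Y + x) / Y := by field_simp
  rw [hsx]
  rcases le_or_gt 0 (s * Y + x) with h | h
  · have hd : (s * Y + x) / Y ≤ 0 := div_nonpos_of_nonneg_of_nonpos h hY.le
    rw [if_pos h, if_neg (not_lt.mpr h), min_eq_left hd, max_eq_right hd]
    field_simp
    ring
  · have hd : 0 ≤ (s * Y + x) / Y := div_nonneg_of_nonpos h.le hY.le
    rw [if_neg (not_le.mpr h), if_pos h, min_eq_right hd, max_eq_left hd]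
    field_simp
    ring

end Work5
section Work6
variable {Ω : Type*} [MeasurableSpace Ω] (ℙ : Measure Ω) [IsProbabilityMeasure ℙ]
  {n : ℕ} (P : Ω → EuclideanSpace ℝ (Fin n))

set_option linter.unusedSectionVars false

lemma G_continuous (hmeas : Measurable P) (hL2 : Integrable (fun ω => ‖P ω‖ ^ 2) ℙ)
    (s γm cp cm d1 d2 : ℝ) : Continuous (GF ℙ P s γm cp cm d1 d2) := by
  have cq : Continuous fun K : EuclideanSpace ℝ (Fin n) => ∫ ω, qtF P s d1 d2 K ω ∂ℙ :=
    aux_continuous ℙ P hmeas hL2 _ (cont_phi2 d1 d2) (|d1| + |d2|) (growth_phi2 d1 d2) s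
  have cmt : Continuous fun K : EuclideanSpace ℝ (Fin n) => ∫ ω, mtF P s cp cm K ω ∂ℙ :=
    aux_continuous ℙ P hmeas hL2 _ (cont_phi cp cm) (|cp| + |cm|) (growth_phi cp cm) s
  exact (cq.sub (cmt.pow 2)).add (continuous_const.mul cmt)

lemma abs_mt_le (s cp cm : ℝ) (hs : 0 ≤ s) (K : EuclideanSpace ℝ (Fin n)) (ω : Ω) :
    |mtF P s cp cm K ω| ≤ (|cp| + |cm|) * s + ((|cp| + |cm|) * ‖K‖) * ‖P ω‖ := by
  set x := (inner ℝ (P ω) K : ℝ)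
  have hx : |s + x| ≤ s + ‖P ω‖ * ‖K‖ := by
    calc |s + x| ≤ |s| + |x| := abs_add_le _ _
    _ ≤ s + ‖P ω‖ * ‖K‖ := by
        rw [abs_of_nonneg hs]
        gcongr; exact abs_real_inner_le_norm _ _
  have h1 : |min (s + x) 0| ≤ |s + x| := abs_min0_le _
  have h2 : |max (s + x) 0| ≤ |s + x| := abs_max0_le _
  calc |mtF P s cp cm K ω| = |cp * min (s + x) 0 + cm * max (s + x) 0| := rfl
  _ ≤ |cp| * |min (s + x) 0| + |cm| * |max (s + x) 0| := by
      refine (abs_add_le _ _).trans ?_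
      rw [abs_mul, abs_mul]
  _ ≤ (|cp| + |cm|) * |s + x| := by
      nlinarith [abs_nonneg cp, abs_nonneg cm, abs_nonneg (s + x),
        abs_nonneg (min (s + x) 0), abs_nonneg (max (s + x) 0)]
  _ ≤ (|cp| + |cm|) * s + ((|cp| + |cm|) * ‖K‖) * ‖P ω‖ := by
      nlinarith [abs_nonneg cp, abs_nonneg cm, norm_nonneg (P ω), norm_nonneg K,
        mul_le_mul_of_nonneg_left hx (by positivity : (0:ℝ) ≤ |cp| + |cm|)]

lemma G_coercive (hn : 1 ≤ n) (hmeas : Measurable P)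
    (hL2 : Integrable (fun ω => ‖P ω‖ ^ 2) ℙ)
    (htwosided : ∀ L : EuclideanSpace ℝ (Fin n), L ≠ 0 →
      0 < ℙ {ω | 0 < (inner ℝ (P ω) L : ℝ)} ∧ 0 < ℙ {ω | (inner ℝ (P ω) L : ℝ) < 0})
    (hatomless : ∀ L : EuclideanSpace ℝ (Fin n), L ≠ 0 →
      ∀ c : ℝ, ℙ {ω | (inner ℝ (P ω) L : ℝ) = c} = 0)
    (s : ℝ) (hs : 0 < s) (γm cp cm d1 d2 : ℝ)
    (hcpcm : ¬(cp = 0 ∧ cm = 0)) (hd1 : cp ^ 2 ≤ d1) (hd2 : cm ^ 2 ≤ d2) :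
    Filter.Tendsto (GF ℙ P s γm cp cm d1 d2)
      (Filter.cocompact (EuclideanSpace ℝ (Fin n))) Filter.atTop := by
  set M := |cp| + |cm| with hMdef
  have hM0 : (0:ℝ) ≤ M := by positivity
  have intP : Integrable (fun ω => ‖P ω‖) ℙ := by
    have ig : Integrable (fun ω => 1 + ‖P ω‖ ^ 2) ℙ := (integrable_const 1).add hL2
    refine Integrable.mono' ig hmeas.norm.aestronglyMeasurable ?_
    refine Filter.Eventually.of_forall fun ω => ?_
    rw [Real.norm_eq_abs, abs_of_nonneg (norm_nonneg _)]
    nlinarith [norm_nonneg (P ω), sq_nonneg (‖P ω‖ - 1)]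
  set CP := ∫ ω, ‖P ω‖ ∂ℙ with hCPdef
  have hCP0 : 0 ≤ CP := integral_nonneg fun ω => norm_nonneg _
  set V : EuclideanSpace ℝ (Fin n) → ℝ := fun K => VarI ℙ (mtF P 0 cp cm K) with hVdef
  have hVcont : Continuous V := by
    have c2 : Continuous fun K : EuclideanSpace ℝ (Fin n) =>
        ∫ ω, (mtF P 0 cp cm K ω) ^ 2 ∂ℙ :=
      aux_continuous ℙ P hmeas hL2 (fun x => (cp * min x 0 + cm * max x 0) ^ 2)
        ((cont_phi cp cm).pow 2) (cp ^ 2 + cm ^ 2 + 1) (growth_phisq cp cm) 0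
    have c1 : Continuous fun K : EuclideanSpace ℝ (Fin n) =>
        ∫ ω, mtF P 0 cp cm K ω ∂ℙ :=
      aux_continuous ℙ P hmeas hL2 _ (cont_phi cp cm) (|cp| + |cm|) (growth_phi cp cm) 0
    exact c2.sub (c1.pow 2)
  have hVnonneg : ∀ K, 0 ≤ V K := by
    intro K
    have := var_nonneg ℙ (int_mt ℙ P hmeas hL2 0 cp cm K) (int_mt_sq ℙ P hmeas hL2 0 cp cm K)
    simp only [hVdef, VarI]
    linarith
  have hsne : (Metric.sphere (0 : EuclideanSpace ℝ (Fin n)) 1).Nonempty := by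
    refine ⟨EuclideanSpace.single (⟨0, hn⟩ : Fin n) (1:ℝ), ?_⟩
    rw [mem_sphere_zero_iff_norm, EuclideanSpace.norm_single, norm_one]
  obtain ⟨L0, hL0mem, hL0min⟩ :=
    (isCompact_sphere (0 : EuclideanSpace ℝ (Fin n)) 1).exists_isMinOn hsne
      hVcont.continuousOn
  set c0 := V L0 with hc0def
  have hL0ne : L0 ≠ 0 := by
    intro h
    have := mem_sphere_zero_iff_norm.mp hL0mem
    rw [h, norm_zero] at this
    norm_num at this
  have hc0pos : 0 < c0 :=
    V_pos ℙ P hmeas hL2 cp cm hcpcm htwosided hatomless L0 hL0ne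
  have hVlb : ∀ K, c0 * ‖K‖ ^ 2 ≤ V K := by
    intro K
    by_cases hK : K = 0
    · subst hK
      simpa using hVnonneg 0
    · have hnK : 0 < ‖K‖ := norm_pos_iff.mpr hK
      set L : EuclideanSpace ℝ (Fin n) := ‖K‖⁻¹ • K with hLdef
      have hLmem : L ∈ Metric.sphere (0 : EuclideanSpace ℝ (Fin n)) 1 := by
        rw [mem_sphere_zero_iff_norm, hLdef, norm_smul, norm_inv, norm_norm,
          inv_mul_cancel₀ (ne_of_gt hnK)]
      have hKL : K = ‖K‖ • L := by
        rw [hLdef, smul_smul, mul_inv_cancel₀ (ne_of_gt hnK), one_smul]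
      have hmin : c0 ≤ V L := (isMinOn_iff.mp hL0min) L hLmem
      have hVK : V K = ‖K‖ ^ 2 * V L := by
        have h7 : V K = V (‖K‖ • L) := by rw [← hKL]
        rw [h7]
        exact V_smul ℙ P cp cm ‖K‖ hnK.le L
      rw [hVK]
      nlinarith [sq_nonneg ‖K‖]
  have key : ∀ K, c0 / 2 * ‖K‖ ^ 2 - (|γm| * (M * CP)) * ‖K‖
      - (4 * (M * s) ^ 2 + |γm| * (M * s)) ≤ GF ℙ P s γm cp cm d1 d2 K := by
    intro K
    have imt := int_mt ℙ P hmeas hL2 s cp cm K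
    have imt2 := int_mt_sq ℙ P hmeas hL2 s cp cm K
    have iqt := int_qt ℙ P hmeas hL2 s d1 d2 K
    have hqm : ∫ ω, (mtF P s cp cm K ω) ^ 2 ∂ℙ ≤ ∫ ω, qtF P s d1 d2 K ω ∂ℙ := by
      refine integral_mono imt2 iqt fun ω => ?_
      simp only [mtF, qtF]
      set x := s + (inner ℝ (P ω) K : ℝ)
      have h0 := min0_mul_max0 x
      have h1 := mul_le_mul_of_nonneg_right hd1 (sq_nonneg (min x 0))
      have h2 := mul_le_mul_of_nonneg_right hd2 (sq_nonneg (max x 0))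
      have hexp : (cp * min x 0 + cm * max x 0) ^ 2
          = cp ^ 2 * (min x 0) ^ 2 + cm ^ 2 * (max x 0) ^ 2
            + 2 * cp * cm * (min x 0 * max x 0) := by ring
      rw [hexp, h0, mul_zero, add_zero]
      linarith
    have hvl := var_lower ℙ P hmeas hL2 s cp cm hs.le K
    have hmb : |∫ ω, mtF P s cp cm K ω ∂ℙ| ≤ M * s + (M * CP) * ‖K‖ := by
      have ib : Integrable (fun ω => M * s + (M * ‖K‖) * ‖P ω‖) ℙ :=
        (integrable_const _).add (intP.const_mul _)
      calc |∫ ω, mtF P s cp cm K ω ∂ℙ| ≤ ∫ ω, |mtF P s cp cm K ω| ∂ℙ := by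
            simpa [Real.norm_eq_abs] using
              norm_integral_le_integral_norm (μ := ℙ) (fun ω => mtF P s cp cm K ω)
        _ ≤ ∫ ω, (M * s + (M * ‖K‖) * ‖P ω‖) ∂ℙ := by
            refine integral_mono imt.abs ib fun ω => ?_
            exact abs_mt_le P s cp cm hs.le K ω
        _ = M * s + (M * CP) * ‖K‖ := by
            rw [integral_add (integrable_const _) (intP.const_mul _), integral_const,
              integral_const_mul]
            simp [measure_univ, ← hCPdef]
            ring
    have hγ : -(|γm| * (M * s + (M * CP) * ‖K‖)) ≤ γm * (∫ ω, mtF P s cp cm K ω ∂ℙ) := by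
      have h1 : |γm * (∫ ω, mtF P s cp cm K ω ∂ℙ)| ≤ |γm| * (M * s + (M * CP) * ‖K‖) := by
        rw [abs_mul]
        exact mul_le_mul_of_nonneg_left hmb (abs_nonneg _)
      have h2 := neg_abs_le (γm * (∫ ω, mtF P s cp cm K ω ∂ℙ))
      linarith
    have hVK := hVlb K
    have hVarmt : VarI ℙ (mtF P s cp cm K)
        = (∫ ω, (mtF P s cp cm K ω) ^ 2 ∂ℙ) - (∫ ω, mtF P s cp cm K ω ∂ℙ) ^ 2 := rfl
    have hVdefK : V K = VarI ℙ (mtF P 0 cp cm K) := rfl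
    simp only [GF]
    rw [hVdefK] at hVK
    rw [hVarmt, ← hMdef] at hvl
    clear_value M CP c0
    linarith [hqm, hvl, hγ, hVK]
  have htend : Filter.Tendsto (fun r : ℝ => c0 / 2 * r ^ 2 - (|γm| * (M * CP)) * r
      - (4 * (M * s) ^ 2 + |γm| * (M * s))) Filter.atTop Filter.atTop := by
    have h1 : Filter.Tendsto (fun r : ℝ => r - (4 * (M * s) ^ 2 + |γm| * (M * s)))
        Filter.atTop Filter.atTop :=
      Filter.tendsto_atTop_add_const_right _ _ Filter.tendsto_id
    refine Filter.tendsto_atTop_mono' Filter.atTop ?_ h1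
    filter_upwards [Filter.eventually_ge_atTop ((|γm| * (M * CP) + 1) * (2 / c0)),
      Filter.eventually_ge_atTop 0] with r h2 h3
    have h4 : |γm| * (M * CP) + 1 ≤ c0 / 2 * r := by
      have h5 := mul_le_mul_of_nonneg_left h2 (le_of_lt (half_pos hc0pos))
      have h6 : c0 / 2 * ((|γm| * (M * CP) + 1) * (2 / c0)) = |γm| * (M * CP) + 1 := by
        field_simp
      linarith
    have h8 := mul_le_mul_of_nonneg_right h4 h3
    clear_value M CP c0
    nlinarith [h8]
  exact Filter.tendsto_atTop_mono key (htend.comp tendsto_norm_cocompact_atTop)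

end Work6
/-- For `Y < 0` and `J(u) = E[q] − (E[m])² + γ⁻Y·E[m]` (with `Y' = sY + P'u`):
`J` attains its global minimum on `ℝⁿ`; `u*` is a global minimizer of `J` iff
`K* = u*/Y` is a global minimizer of `F⁻`; and any global minimum value of `J`
equals `Y²` times the global minimum value of `F⁻`. -/
theorem J_min_iff_Fminus_min {Ω : Type*} [MeasurableSpace Ω] (ℙ : Measure Ω)
    [IsProbabilityMeasure ℙ] {n : ℕ} (hn : 1 ≤ n)
    (P : Ω → EuclideanSpace ℝ (Fin n)) (hmeas : Measurable P)
    (hL2 : Integrable (fun ω => ‖P ω‖ ^ 2) ℙ)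
    (s ρ' γm ap am bp bm : ℝ) (hs : 0 < s) (hρ : 0 < ρ')
    (htwosided : ∀ L : EuclideanSpace ℝ (Fin n), L ≠ 0 →
      0 < ℙ {ω | 0 < (inner ℝ (P ω) L : ℝ)} ∧ 0 < ℙ {ω | (inner ℝ (P ω) L : ℝ) < 0})
    (hatomless : ∀ L : EuclideanSpace ℝ (Fin n), L ≠ 0 →
      ∀ c : ℝ, ℙ {ω | (inner ℝ (P ω) L : ℝ) = c} = 0)
    (hbp : ap ^ 2 ≤ bp) (hbm : am ^ 2 ≤ bm)
    (hne : (ρ' + ap, ρ' + am) ≠ ((0 : ℝ), (0 : ℝ)))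
    (Y : ℝ) (hY : Y < 0) :
    let J : EuclideanSpace ℝ (Fin n) → ℝ := fun u =>
      (∫ ω, qRV P s ρ' ap am bp bm Y u ω ∂ℙ) -
        (∫ ω, mRV P s ρ' ap am Y u ω ∂ℙ) ^ 2 +
        γm * Y * (∫ ω, mRV P s ρ' ap am Y u ω ∂ℙ)
    let F : EuclideanSpace ℝ (Fin n) → ℝ := Fminus ℙ P s ρ' γm ap am bp bm
    (∃ ustar : EuclideanSpace ℝ (Fin n), ∀ u, J ustar ≤ J u) ∧
      (∀ ustar : EuclideanSpace ℝ (Fin n),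
        (∀ u, J ustar ≤ J u) ↔ (∀ K, F ((1 / Y) • ustar) ≤ F K)) ∧
      (∀ (ustar Kstar : EuclideanSpace ℝ (Fin n)),
        (∀ u, J ustar ≤ J u) → (∀ K, F Kstar ≤ F K) →
          J ustar = Y ^ 2 * F Kstar) := by
  intro J F
  have hYne : Y ≠ 0 := ne_of_lt hY
  have hY2 : (0:ℝ) < Y ^ 2 := by positivity
  have hJG : ∀ u, J u = Y ^ 2 * GF ℙ P s γm (ρ' + ap) (ρ' + am)
      (ρ' ^ 2 + 2 * ρ' * ap + bp) (ρ' ^ 2 + 2 * ρ' * am + bm) ((1 / Y) • u) := by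
    intro u
    have hq : (∫ ω, qRV P s ρ' ap am bp bm Y u ω ∂ℙ)
        = Y ^ 2 * ∫ ω, qtF P s (ρ' ^ 2 + 2 * ρ' * ap + bp) (ρ' ^ 2 + 2 * ρ' * am + bm)
            ((1 / Y) • u) ω ∂ℙ := by
      rw [← integral_const_mul]
      exact integral_congr_ae (Filter.Eventually.of_forall fun ω =>
        qRV_eq P s ρ' ap am bp bm Y hY u ω)
    have hm : (∫ ω, mRV P s ρ' ap am Y u ω ∂ℙ)
        = Y * ∫ ω, mtF P s (ρ' + ap) (ρ' + am) ((1 / Y) • u) ω ∂ℙ := by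
      rw [← integral_const_mul]
      exact integral_congr_ae (Filter.Eventually.of_forall fun ω =>
        mRV_eq P s ρ' ap am Y hY u ω)
    show (∫ ω, qRV P s ρ' ap am bp bm Y u ω ∂ℙ) -
        (∫ ω, mRV P s ρ' ap am Y u ω ∂ℙ) ^ 2 +
        γm * Y * (∫ ω, mRV P s ρ' ap am Y u ω ∂ℙ) = _
    rw [hq, hm]
    simp only [GF]
    ring
  have hFG : ∀ K, F K = GF ℙ P s γm (ρ' + ap) (ρ' + am)
      (ρ' ^ 2 + 2 * ρ' * ap + bp) (ρ' ^ 2 + 2 * ρ' * am + bm) K :=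
    fun K => FeqG ℙ P hmeas hL2 s ρ' γm ap am bp bm K
  have hJF : ∀ u, J u = Y ^ 2 * F ((1 / Y) • u) := fun u => by rw [hJG u, hFG]
  have hss : ∀ K : EuclideanSpace ℝ (Fin n), (1 / Y) • (Y • K) = K := by
    intro K
    rw [smul_smul, one_div, inv_mul_cancel₀ hYne, one_smul]
  have hJYK : ∀ K, J (Y • K) = Y ^ 2 * F K := fun K => by rw [hJF, hss]
  have hcpcm : ¬(ρ' + ap = 0 ∧ ρ' + am = 0) := by
    rintro ⟨h1, h2⟩
    exact hne (by simp [h1, h2])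
  have hd1 : (ρ' + ap) ^ 2 ≤ ρ' ^ 2 + 2 * ρ' * ap + bp := by nlinarith [hbp]
  have hd2 : (ρ' + am) ^ 2 ≤ ρ' ^ 2 + 2 * ρ' * am + bm := by nlinarith [hbm]
  have hGcont := G_continuous ℙ P hmeas hL2 s γm (ρ' + ap) (ρ' + am)
    (ρ' ^ 2 + 2 * ρ' * ap + bp) (ρ' ^ 2 + 2 * ρ' * am + bm)
  have hGcoer := G_coercive ℙ P hn hmeas hL2 htwosided hatomless s hs γm
    (ρ' + ap) (ρ' + am) (ρ' ^ 2 + 2 * ρ' * ap + bp) (ρ' ^ 2 + 2 * ρ' * am + bm)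
    hcpcm hd1 hd2
  obtain ⟨K0, hK0⟩ := hGcont.exists_forall_le hGcoer
  have hK0F : ∀ K, F K0 ≤ F K := fun K => by rw [hFG, hFG]; exact hK0 K
  have hdir : ∀ ustar : EuclideanSpace ℝ (Fin n), (∀ u, J ustar ≤ J u) →
      ∀ K, F ((1 / Y) • ustar) ≤ F K := by
    intro ustar hmin K
    have h := hmin (Y • K)
    rw [hJYK, hJF] at h
    exact le_of_mul_le_mul_left h hY2
  refine ⟨⟨Y • K0, ?_⟩, ?_, ?_⟩
  · intro u
    rw [hJYK, hJF u]
    exact mul_le_mul_of_nonneg_left (hK0F _) hY2.le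
  · intro ustar
    constructor
    · exact hdir ustar
    · intro hminF u
      rw [hJF ustar, hJF u]
      exact mul_le_mul_of_nonneg_left (hminF _) hY2.le
  · intro ustar Kstar h1 h2
    have h3 := hdir ustar h1
    have h4 : F ((1 / Y) • ustar) = F Kstar :=
      le_antisymm (h3 Kstar) (h2 ((1 / Y) • ustar))
    rw [hJF ustar, h4]
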